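/- arXiv:1903.10435 — 6 statements merged into one kernel-verified Lean document; each statement's English description precedes it below -/
import Mathlib

section
/- If a(x) and b(x) are formal power series with constant term 1 satisfying b(x·a(x)) = a(x), then for all m ≥ 1 and n ≥ 0, the coefficient of x^n in (1 + x·(log a(x))')·a(x)^m equals the coefficient of x^n in b(x)^{m+n}, where 1 + x·(log a)' = 1 + x·a'(x)/a(x). -/
open PowerSeries Finset

namespace Stmt4Aux

variable {K : Type*} [Field K] [CharZero K]

lemma coeff_X_mul_deriv (f : PowerSeries K) (n : ℕ) :
    coeff n (X * f.derivativeFun) = (n : K) * coeff n f := by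
  cases n with
  | zero => simp
  | succ n => rw [coeff_succ_X_mul, show f.derivativeFun = d⁄dX K f from rfl, coeff_derivative]; push_cast; ring

lemma mul_deriv_pow (f : PowerSeries K) (j : ℕ) :
    f * derivativeFun (f ^ j) = C (j : K) * (derivativeFun f * f ^ j) := by
  induction j with
  | zero => simp [derivativeFun_one]
  | succ j ih =>
    rw [pow_succ, derivativeFun_mul, smul_eq_mul, smul_eq_mul]
    push_cast [map_add, map_one]
    linear_combination f * ih

/-- `comp a g` is `g(X*a)` defined coefficientwise. -/
noncomputable def comp (a g : PowerSeries K) : PowerSeries K :=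
  mk fun n => ∑ k ∈ range (n + 1), coeff k g * coeff (n - k) (a ^ k)

/-- truncated polynomial version of composition -/
noncomputable def compN (a : PowerSeries K) (N : ℕ) (g : PowerSeries K) : PowerSeries K :=
  ∑ k ∈ range N, C (coeff k g) * (X ^ k * a ^ k)

lemma coeff_compN (a g : PowerSeries K) {n N : ℕ} (h : n < N) :
    coeff n (compN a N g) = coeff n (comp a g) := by
  rw [comp, coeff_mk, compN, map_sum]
  rw [← Finset.sum_subset (Finset.range_subset_range.2 h)]
  · apply Finset.sum_congr rfl
    intro k hk
    rw [coeff_C_mul, coeff_X_pow_mul', if_pos (Nat.lt_succ_iff.mp (Finset.mem_range.mp hk))]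
  · intro k _ hk'
    rw [coeff_C_mul, coeff_X_pow_mul', if_neg, mul_zero]
    exact fun hle => hk' (Finset.mem_range.mpr (Nat.lt_succ_of_le hle))

lemma coeff_compN_mul (a g h : PowerSeries K) {n N : ℕ} (hn : n < N) :
    coeff n (compN a N g * compN a N h) = coeff n (compN a N (g * h)) := by
  have key : ∀ k l : ℕ, ¬ k + l ≤ n → coeff n (X ^ (k + l) * a ^ (k + l)) = 0 := by
    intro k l hkl
    rw [coeff_X_pow_mul', if_neg hkl]
  -- LHS as a double sum
  have hL : coeff n (compN a N g * compN a N h)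
      = ∑ p ∈ range N ×ˢ range N,
          coeff p.1 g * coeff p.2 h * coeff n (X ^ (p.1 + p.2) * a ^ (p.1 + p.2)) := by
    rw [compN, compN, Finset.sum_mul_sum, Finset.sum_product]
    simp only [map_sum]
    apply Finset.sum_congr rfl; intro k _
    apply Finset.sum_congr rfl; intro l _
    rw [show C (coeff k g) * (X ^ k * a ^ k) * (C (coeff l h) * (X ^ l * a ^ l))
        = C (coeff k g) * (C (coeff l h) * (X ^ (k + l) * a ^ (k + l))) by
      rw [pow_add, pow_add]; ring]
    rw [coeff_C_mul, coeff_C_mul]; ring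
  -- RHS as nested antidiagonal sum
  have hR : coeff n (compN a N (g * h))
      = ∑ p ∈ range N, ∑ kl ∈ Finset.HasAntidiagonal.antidiagonal p,
          coeff kl.1 g * coeff kl.2 h * coeff n (X ^ (kl.1 + kl.2) * a ^ (kl.1 + kl.2)) := by
    rw [compN, map_sum]
    apply Finset.sum_congr rfl
    intro p _
    rw [coeff_C_mul, PowerSeries.coeff_mul, Finset.sum_mul]
    apply Finset.sum_congr rfl
    intro kl hkl
    rw [Finset.HasAntidiagonal.mem_antidiagonal] at hkl
    rw [hkl]
  rw [hL, hR]
  rw [← Finset.sum_biUnion]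
  · apply (Finset.sum_subset _ _).symm
    · intro kl hkl
      simp only [Finset.mem_biUnion, Finset.mem_range, Finset.HasAntidiagonal.mem_antidiagonal] at hkl
      obtain ⟨p, hp, hkl⟩ := hkl
      subst hkl
      simp only [Finset.mem_product, Finset.mem_range]
      constructor
      · exact lt_of_le_of_lt (Nat.le_add_right _ _) hp
      · exact lt_of_le_of_lt (Nat.le_add_left _ _) hp
    · intro kl _ hkl
      rw [key kl.1 kl.2, mul_zero]
      intro hle
      apply hkl
      simp only [Finset.mem_biUnion, Finset.mem_range, Finset.HasAntidiagonal.mem_antidiagonal]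
      exact ⟨kl.1 + kl.2, lt_of_le_of_lt hle hn, rfl⟩
  · intro p _ q _ hpq
    simp only [Finset.disjoint_left, Finset.HasAntidiagonal.mem_antidiagonal]
    intro kl h1 h2
    exact hpq (h1 ▸ h2 ▸ rfl)

lemma comp_mul (a g h : PowerSeries K) : comp a g * comp a h = comp a (g * h) := by
  ext n
  rw [PowerSeries.coeff_mul]
  have : ∀ kl ∈ Finset.HasAntidiagonal.antidiagonal n,
      coeff kl.1 (comp a g) * coeff kl.2 (comp a h)
        = coeff kl.1 (compN a (n+1) g) * coeff kl.2 (compN a (n+1) h) := by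
    intro kl hkl
    rw [Finset.HasAntidiagonal.mem_antidiagonal] at hkl
    rw [coeff_compN, coeff_compN]
    · omega
    · omega
  rw [Finset.sum_congr rfl this, ← PowerSeries.coeff_mul,
    coeff_compN_mul a g h (Nat.lt_succ_self n), coeff_compN a _ (Nat.lt_succ_self n)]

lemma comp_one (a : PowerSeries K) : comp a 1 = 1 := by
  ext n
  rw [comp, coeff_mk, Finset.sum_eq_single 0]
  · simp
  · intro k _ hk
    rw [PowerSeries.coeff_one, if_neg hk, zero_mul]
  · intro h
    exact absurd (Finset.mem_range.mpr (Nat.succ_pos n)) h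

lemma comp_pow (a g : PowerSeries K) (m : ℕ) : comp a (g ^ m) = (comp a g) ^ m := by
  induction m with
  | zero => simpa using comp_one a
  | succ m ih => rw [pow_succ, pow_succ, ← comp_mul, ih]

end Stmt4Aux

open Stmt4Aux

/-- If `a(0) = b(0) = 1` and `b(x·a(x)) = a(x)` (coefficientwise), then
`[xⁿ] (1 + x(log a)') aᵐ = [xⁿ] b^{m+n}`, where `(log a)' = a'/a`. -/
theorem stmt4 (K : Type*) [Field K] [CharZero K] (a b : PowerSeries K)
    (ha : constantCoeff a = 1) (hb : constantCoeff b = 1)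
    (hcomp : ∀ n : ℕ, coeff n a
      = ∑ m ∈ Finset.range (n + 1), coeff m b * coeff (n - m) (a ^ m)) :
    ∀ m n : ℕ, 1 ≤ m →
      coeff n ((1 + X * a.derivativeFun * a⁻¹) * a ^ m) = coeff n (b ^ (m + n)) := by
  have ha0 : a ≠ 0 := fun h => by simp [h] at ha
  have hb0 : b ≠ 0 := fun h => by simp [h] at hb
  -- `a = comp a b`
  have hab : comp a b = a := by
    ext n
    rw [comp, coeff_mk, hcomp n]
  -- powers relation
  have hpow : ∀ m n : ℕ, coeff n (a ^ m)
      = ∑ k ∈ Finset.range (n + 1), coeff k (b ^ m) * coeff (n - k) (a ^ k) := by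
    intro m n
    have : a ^ m = comp a (b ^ m) := by rw [comp_pow, hab]
    rw [this, comp, coeff_mk]
  -- the key ring identity : (m+n) • (X * D(b^m) * b^n) = m • (X * D(b^{m+n}))
  have hE : ∀ m n : ℕ, C ((m + n : ℕ) : K) * (X * derivativeFun (b ^ m) * b ^ n)
      = C (m : K) * (X * derivativeFun (b ^ (m + n))) := by
    intro m n
    apply mul_left_cancel₀ hb0
    have e1 := mul_deriv_pow b m
    have e2 := mul_deriv_pow b (m + n)
    push_cast at e2 ⊢
    linear_combination (C ((m : K) + n) * X * b ^ n) * e1 - (C (m : K) * X) * e2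
  -- main claim, strong induction on n
  have claim : ∀ n m : ℕ, (m : K) * coeff n (b ^ (m + n))
      = ((m + n : ℕ) : K) * coeff n (a ^ m) := by
    intro n
    induction n using Nat.strong_induction_on with
    | _ n IH =>
      intro m
      rcases Nat.eq_zero_or_pos n with rfl | hn
      · simp [coeff_zero_eq_constantCoeff, map_pow, ha, hb]
      have hnK : (n : K) ≠ 0 := Nat.cast_ne_zero.mpr hn.ne'
      -- step 1
      have hA : (n : K) * coeff n (a ^ m)
          = ∑ k ∈ Finset.range (n + 1), coeff k (b ^ m) * ((k : K) * coeff (n - k) (b ^ n)) := by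
        rw [hpow m n, Finset.mul_sum]
        apply Finset.sum_congr rfl
        intro k hk
        have hk' : k ≤ n := Nat.lt_succ_iff.mp (Finset.mem_range.mp hk)
        rcases Nat.eq_zero_or_pos k with rfl | hkpos
        · simp only [pow_zero, Nat.sub_zero, Nat.cast_zero, zero_mul, mul_zero]
          rw [PowerSeries.coeff_one, if_neg hn.ne', mul_zero, mul_zero]
        · have := IH (n - k) (by omega) k
          rw [show k + (n - k) = n by omega] at this
          linear_combination (- coeff k (b ^ m)) * this
      -- step 2
      have hS : ∑ k ∈ Finset.range (n + 1), coeff k (b ^ m) * ((k : K) * coeff (n - k) (b ^ n))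
          = coeff n (X * derivativeFun (b ^ m) * b ^ n) := by
        rw [PowerSeries.coeff_mul, Finset.Nat.sum_antidiagonal_eq_sum_range_succ_mk]
        apply Finset.sum_congr rfl
        intro k _
        rw [coeff_X_mul_deriv]
        ring
      -- step 3: coefficients of hE
      have hE' := congrArg (fun f => coeff n f) (hE m n)
      simp only [coeff_C_mul] at hE'
      rw [coeff_X_mul_deriv] at hE'
      apply mul_left_cancel₀ hnK
      push_cast at hE' hA ⊢
      linear_combination -hE' - ((m : K) + n) * hA - ((m : K) + n) * hS
  -- conclusion
  intro m n hm
  obtain ⟨m', rfl⟩ : ∃ m', m = m' + 1 := ⟨m - 1, by omega⟩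
  have hinv : a⁻¹ * a = 1 := PowerSeries.inv_mul_cancel a (by rw [ha]; exact one_ne_zero)
  have hser : (1 + X * a.derivativeFun * a⁻¹) * a ^ (m' + 1)
      = a ^ (m' + 1) + X * a.derivativeFun * a ^ m' := by
    have : a ^ (m' + 1) = a * a ^ m' := by rw [pow_succ]; ring
    linear_combination (X * a.derivativeFun * a ^ m') * hinv + (1 + X * a.derivativeFun * a⁻¹ - 1) * this
  rw [hser, map_add]
  -- m * coeff n (X * Da * a^m') = n * coeff n (a^(m'+1))
  have hc : ((m' + 1 : ℕ) : K) * coeff n (X * a.derivativeFun * a ^ m')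
      = (n : K) * coeff n (a ^ (m' + 1)) := by
    have hid : C ((m' + 1 : ℕ) : K) * (X * a.derivativeFun * a ^ m')
        = X * derivativeFun (a ^ (m' + 1)) := by
      apply mul_left_cancel₀ ha0
      have := mul_deriv_pow a (m' + 1)
      push_cast at this ⊢
      linear_combination (-X) * this
    have := congrArg (fun f => coeff n f) hid
    simp only [coeff_C_mul] at this
    rw [coeff_X_mul_deriv] at this
    exact this
  have hclaim := claim n (m' + 1)
  have hmK : ((m' + 1 : ℕ) : K) ≠ 0 := Nat.cast_ne_zero.mpr (Nat.succ_ne_zero m')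
  apply mul_left_cancel₀ hmK
  push_cast at hc hclaim ⊢
  linear_combination hc - hclaim
end

section
/- Let b(x) = φx + √(1 + (φ² − β)x²) be the formal power series whose square-root factor is the formal square root of 1 + (φ² − β)x² with constant term 1. Then for every n ≥ 1 there exist polynomials t_n(x) of degree ≤ n and u_n(x) of degree < n such that b(x)^n = t_n(x) + u_n(x)·√(1 + (φ² − β)x²), and moreover b(x)^{2n} − 2t_n(x)·b(x)^n + (βx² − 1)^n = 0. -/
set_option maxRecDepth 4000
open PowerSeries

lemma stmt6_key (φ β : ℝ) (s : PowerSeries ℝ)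
    (hs : s ^ 2 = 1 + C (φ ^ 2 - β) * X ^ 2) :
    ∀ n : ℕ, 1 ≤ n → ∃ t u : Polynomial ℝ,
      t.degree ≤ (n : ℕ) ∧ u.degree ≤ ((n - 1 : ℕ) : WithBot ℕ) ∧
      (C φ * X + s) ^ n = (t : PowerSeries ℝ) + (u : PowerSeries ℝ) * s ∧
      (t : PowerSeries ℝ) ^ 2 - (u : PowerSeries ℝ) ^ 2 * s ^ 2
        = (C β * X ^ 2 - 1) ^ n := by
  simp only [map_sub, map_pow] at hs
  intro n hn
  induction n, hn using Nat.le_induction with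
  | base =>
      refine ⟨Polynomial.C φ * Polynomial.X, 1, Polynomial.degree_C_mul_X_le φ, ?_, ?_, ?_⟩
      · simpa using Polynomial.degree_one_le
      · simp only [Polynomial.coe_add, Polynomial.coe_mul, Polynomial.coe_one,
          Polynomial.coe_C, Polynomial.coe_X]
        ring
      · simp only [Polynomial.coe_add, Polynomial.coe_mul, Polynomial.coe_one,
          Polynomial.coe_C, Polynomial.coe_X]
        linear_combination -hs
  | succ n hn ih =>
      obtain ⟨t, u, ht, hu, h1, h2⟩ := ih
      refine ⟨Polynomial.C φ * Polynomial.X * t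
          + u * (1 + Polynomial.C (φ ^ 2 - β) * Polynomial.X ^ 2),
        t + Polynomial.C φ * Polynomial.X * u, ?_, ?_, ?_, ?_⟩
      · refine (Polynomial.degree_add_le _ _).trans (max_le ?_ ?_)
        · refine (Polynomial.degree_mul_le _ _).trans ?_
          calc (Polynomial.C φ * Polynomial.X).degree + t.degree
              ≤ 1 + (n : WithBot ℕ) := add_le_add (Polynomial.degree_C_mul_X_le φ) ht
            _ = ((n + 1 : ℕ) : WithBot ℕ) := by push_cast; ring
        · refine (Polynomial.degree_mul_le _ _).trans ?_
          have h2' : (1 + Polynomial.C (φ ^ 2 - β) * Polynomial.X ^ 2).degree ≤ 2 := by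
            compute_degree
          calc u.degree + (1 + Polynomial.C (φ ^ 2 - β) * Polynomial.X ^ 2).degree
              ≤ ((n - 1 : ℕ) : WithBot ℕ) + 2 := add_le_add hu h2'
            _ = ((n + 1 : ℕ) : WithBot ℕ) := by
                have h : n - 1 + 2 = n + 1 := by omega
                rw [show (2 : WithBot ℕ) = ((2 : ℕ) : WithBot ℕ) by rfl, ← Nat.cast_add, h]
      · have : (n + 1 - 1 : ℕ) = n := by omega
        rw [this]
        refine (Polynomial.degree_add_le _ _).trans (max_le ht ?_)
        refine (Polynomial.degree_mul_le _ _).trans ?_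
        calc (Polynomial.C φ * Polynomial.X).degree + u.degree
            ≤ 1 + ((n - 1 : ℕ) : WithBot ℕ) := add_le_add (Polynomial.degree_C_mul_X_le φ) hu
          _ = (n : WithBot ℕ) := by
              have h : 1 + (n - 1) = n := by omega
              rw [show (1 : WithBot ℕ) = ((1 : ℕ) : WithBot ℕ) by rfl, ← Nat.cast_add, h]
      · simp only [Polynomial.coe_add, Polynomial.coe_mul, Polynomial.coe_pow,
          Polynomial.coe_one, Polynomial.coe_C, Polynomial.coe_X, Polynomial.coe_sub, map_sub, map_pow] at h1 ⊢
        linear_combination (C φ * X + s) * h1 + (u : PowerSeries ℝ) * hs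
      · simp only [Polynomial.coe_add, Polynomial.coe_mul, Polynomial.coe_pow,
          Polynomial.coe_one, Polynomial.coe_C, Polynomial.coe_X, Polynomial.coe_sub, map_sub, map_pow] at h2 ⊢
        linear_combination (C β * X ^ 2 - 1) * h2
          + ((C β * X ^ 2 - 1) * (u : PowerSeries ℝ) ^ 2
             - ((t : PowerSeries ℝ) + C φ * X * (u : PowerSeries ℝ)) ^ 2) * hs

/-- With `b(x) = φx + √(1 + (φ²-β)x²)` (formal square root with constant term 1),
for every `n ≥ 1` there are polynomials `t` of degree ≤ n and `u` of degree < n with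
`bⁿ = t + u·√(1+(φ²-β)x²)` and `b^{2n} - 2t·bⁿ + (βx²-1)ⁿ = 0`. -/
theorem stmt6 (φ β : ℝ) (s : PowerSeries ℝ) (hs0 : constantCoeff s = 1)
    (hs : s ^ 2 = 1 + C (φ ^ 2 - β) * X ^ 2)
    (b : PowerSeries ℝ) (hb : b = C φ * X + s) :
    ∀ n : ℕ, 1 ≤ n → ∃ t u : Polynomial ℝ,
      t.degree ≤ (n : ℕ) ∧ u.degree < (n : ℕ) ∧
      b ^ n = (t : PowerSeries ℝ) + (u : PowerSeries ℝ) * s ∧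
      b ^ (2 * n) - 2 * (t : PowerSeries ℝ) * b ^ n + (C β * X ^ 2 - 1) ^ n = 0 := by
  intro n hn
  obtain ⟨t, u, ht, hu, h1, h2⟩ := stmt6_key φ β s hs n hn
  subst hb
  refine ⟨t, u, ht, ?_, h1, ?_⟩
  · exact lt_of_le_of_lt hu (by exact_mod_cast Nat.sub_lt hn one_pos)
  · rw [two_mul, pow_add, h1]
    linear_combination -h2
end

section
/- For all n ≥ 1, ((x+1)^n − (x−1)^n)/2 = n·∏_{m=1}^{n−1}(x + i·cot(mπ/n)) as polynomials in ℂ[x]. -/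
open Polynomial

/-- Scalar factorization `a^n - b^n = ∏ (a - ω^k b)` for a primitive root `ω`. -/
lemma scalar_pow_sub_pow {n : ℕ} (hn : 0 < n) {ω : ℂ} (hω : IsPrimitiveRoot ω n)
    (a b : ℂ) : a ^ n - b ^ n = ∏ k ∈ Finset.range n, (a - ω ^ k * b) := by
  have h := X_pow_sub_C_eq_prod hω hn (rfl : b ^ n = b ^ n)
  have := congrArg (Polynomial.eval a) h
  simpa [eval_prod] using this

lemma cot_key {θ : ℝ} (hs : Real.sin θ ≠ 0) :
    1 + Complex.exp (2 * θ * Complex.I) =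
      (1 - Complex.exp (2 * θ * Complex.I)) *
        (Complex.I * Complex.ofReal (Real.cos θ / Real.sin θ)) := by
  have hsC : (Complex.sin θ) ≠ 0 := by
    rw [← Complex.ofReal_sin]
    exact_mod_cast hs
  have hexp : Complex.exp (2 * θ * Complex.I) =
      Complex.cos (2 * θ) + Complex.sin (2 * θ) * Complex.I := by
    rw [← Complex.exp_mul_I]
  rw [hexp, Complex.cos_two_mul, Complex.sin_two_mul]
  have hcs : Complex.sin θ ^ 2 + Complex.cos θ ^ 2 = 1 := Complex.sin_sq_add_cos_sq θ
  have hco : (Complex.ofReal (Real.cos θ / Real.sin θ)) =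
      Complex.cos θ / Complex.sin θ := by
    push_cast [Complex.ofReal_cos, Complex.ofReal_sin]
    ring
  rw [hco]
  have hI : (Complex.I) ^ 2 = -1 := Complex.I_sq
  have hsC' : Complex.sin (θ : ℂ) ≠ 0 := hsC
  have hinv : Complex.sin (θ:ℂ) * (Complex.sin (θ:ℂ))⁻¹ = 1 := mul_inv_cancel₀ hsC
  linear_combination (2 * Complex.I * Complex.cos (θ:ℂ) / Complex.sin (θ:ℂ)) * hcs + (2 * Complex.cos (θ:ℂ)^2) * hI + (-2 * Complex.cos (θ:ℂ) * Complex.sin (θ:ℂ) * Complex.I + 2 * Complex.cos (θ:ℂ)^2 * Complex.I^2) * hinv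

/-- For `n ≥ 1`, `((x+1)ⁿ - (x-1)ⁿ)/2 = n·∏_{m=1}^{n-1} (x + i·cot(mπ/n))` in `ℂ[x]`. -/
theorem stmt8 (n : ℕ) (hn : 1 ≤ n) :
    (X + 1 : Polynomial ℂ) ^ n - (X - 1) ^ n =
      2 * (n : Polynomial ℂ) * ∏ m ∈ Finset.Icc 1 (n - 1),
        (X + C (Complex.I * Complex.ofReal
          (Real.cos ((m : ℝ) * Real.pi / n) / Real.sin ((m : ℝ) * Real.pi / n)))) := by
  have hn0 : 0 < n := hn
  set ω : ℂ := Complex.exp (2 * Real.pi * Complex.I / n) with hωdef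
  have hω : IsPrimitiveRoot ω n := Complex.isPrimitiveRoot_exp n hn0.ne'
  set c : ℕ → ℂ := fun m => Complex.I * Complex.ofReal
      (Real.cos ((m : ℝ) * Real.pi / n) / Real.sin ((m : ℝ) * Real.pi / n)) with hc
  apply Polynomial.funext
  intro z
  simp only [eval_mul, eval_sub, eval_add, eval_pow, eval_X, eval_one, eval_prod,
    eval_C, eval_ofNat, eval_natCast]
  -- key pointwise factorization
  have hins : Finset.range n = insert 0 (Finset.Icc 1 (n - 1)) := by
    ext a
    simp only [Finset.mem_range, Finset.mem_insert, Finset.mem_Icc]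
    omega
  have h0 : (0 : ℕ) ∉ Finset.Icc 1 (n - 1) := by simp
  have hkey : ∀ m ∈ Finset.Icc 1 (n - 1),
      (z + 1) - ω ^ m * (z - 1) = (1 - ω ^ m) * (z + c m) := by
    intro m hm
    rw [Finset.mem_Icc] at hm
    set θ : ℝ := (m : ℝ) * Real.pi / n with hθ
    have hθpos : 0 < θ := by
      apply div_pos (mul_pos _ Real.pi_pos) (by exact_mod_cast hn0)
      exact_mod_cast hm.1
    have hθlt : θ < Real.pi := by
      rw [hθ, div_lt_iff₀ (by exact_mod_cast hn0)]
      have : (m : ℝ) < n := by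
        have : m < n := by omega
        exact_mod_cast this
      nlinarith [Real.pi_pos]
    have hs : Real.sin θ ≠ 0 := ne_of_gt (Real.sin_pos_of_pos_of_lt_pi hθpos hθlt)
    have hωm : ω ^ m = Complex.exp (2 * θ * Complex.I) := by
      rw [hωdef, ← Complex.exp_nat_mul]
      congr 1
      push_cast [hθ]
      have : (n : ℂ) ≠ 0 := by exact_mod_cast hn0.ne'
      field_simp
    have := cot_key hs
    rw [← hωm] at this
    have hcm : c m = Complex.I * Complex.ofReal (Real.cos θ / Real.sin θ) := rfl
    rw [hcm]
    linear_combination this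
  have hprod1 : ∏ m ∈ Finset.Icc 1 (n - 1), (1 - ω ^ m) = (n : ℂ) := by
    obtain ⟨n', rfl⟩ : ∃ n', n = n' + 1 := ⟨n - 1, by omega⟩
    have := hω.prod_one_sub_pow_eq_order
    rw [show n' + 1 - 1 = n' from rfl]
    push_cast
    rw [← this]
    rw [Finset.prod_bij' (fun m _ => m - 1) (fun k _ => k + 1)]
    · intro m hm; rw [Finset.mem_Icc] at hm; simp only [Finset.mem_range]; omega
    · intro k hk; rw [Finset.mem_range] at hk; rw [Finset.mem_Icc]; omega
    · intro m hm; rw [Finset.mem_Icc] at hm; omega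
    · intro k hk; omega
    · intro m hm
      rw [Finset.mem_Icc] at hm
      congr 2
      omega
  calc (z + 1) ^ n - (z - 1) ^ n
      = ∏ k ∈ Finset.range n, ((z + 1) - ω ^ k * (z - 1)) :=
        scalar_pow_sub_pow hn0 hω _ _
    _ = ((z + 1) - ω ^ 0 * (z - 1)) *
        ∏ m ∈ Finset.Icc 1 (n - 1), ((z + 1) - ω ^ m * (z - 1)) := by
        rw [hins, Finset.prod_insert h0]
    _ = 2 * ∏ m ∈ Finset.Icc 1 (n - 1), ((1 - ω ^ m) * (z + c m)) := by
        rw [Finset.prod_congr rfl hkey]; ring_nf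
    _ = 2 * ((∏ m ∈ Finset.Icc 1 (n - 1), (1 - ω ^ m)) *
        ∏ m ∈ Finset.Icc 1 (n - 1), (z + c m)) := by
        rw [Finset.prod_mul_distrib]
    _ = 2 * (n : ℂ) * ∏ m ∈ Finset.Icc 1 (n - 1), (z + c m) := by
        rw [hprod1]; ring
end

section
/- Write (√(1+4x²)+1)/2 for the formal power series c(x) with c(0) = 1 and (2c(x) − 1)² = 1 + 4x². Then for every n ≥ 0, the n-th power satisfies: c(x)^n = (x^n·L_n(1/x) + x^n·F_n(1/x))/2 + (x^{n−1}·F_n(1/x)·(√(1+4x²) − x))/2, where x^n L_n(1/x) and x^n F_n(1/x) denote the reversed Lucas and Fibonacci polynomials. Equivalently, expanding (1+x)^n via the substitution x ↦ x(1+x): (1+x)^n evaluated through the Fibonacci matrix (1, x(1+x)) applied to c(x)^n recovers (1+x)^n. -/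
open PowerSeries

lemma reflect_one' {R : Type*} [Semiring R] (N : ℕ) :
    Polynomial.reflect N (1 : Polynomial R) = Polynomial.X ^ N := by
  simpa using Polynomial.reflect_monomial N 0 (R := R)

/-- shift lemma: reflecting at a higher level multiplies by a power of X -/
lemma reflect_shift {R : Type*} [Semiring R] (p : Polynomial R) (N : ℕ)
    (h : p.natDegree ≤ N) :
    Polynomial.reflect (N + 2) p = Polynomial.X ^ 2 * Polynomial.reflect N p := by
  have := Polynomial.reflect_mul (1 : Polynomial R) p
    (F := 2) (G := N) (by simp) h
  rw [add_comm]
  simpa [reflect_one'] using this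

lemma reflect_X_mul {R : Type*} [Semiring R] (p : Polynomial R) (N : ℕ)
    (h : p.natDegree ≤ N) :
    Polynomial.reflect (N + 1) (Polynomial.X * p) = Polynomial.reflect N p := by
  have := Polynomial.reflect_mul (Polynomial.X : Polynomial R) p
    (F := 1) (G := N) Polynomial.natDegree_X_le h
  simpa [add_comm] using this

/-- For `c(x) = (1 + √(1+4x²))/2` (formal square root with constant term 1) and the
Lucas and Fibonacci polynomials `L`, `F`, for every `n ≥ 0`:
`cⁿ = (xⁿL_n(1/x) + xⁿF_n(1/x))/2 + x^{n-1}F_n(1/x)·(√(1+4x²) - x)/2`, where the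
reversed polynomials are expressed via `Polynomial.reflect` and `√(1+4x²) = 2c - 1`. -/
theorem stmt13 (L F : ℕ → Polynomial ℝ)
    (hL0 : L 0 = 2) (hL1 : L 1 = Polynomial.X)
    (hLrec : ∀ n : ℕ, L (n + 2) = Polynomial.X * L (n + 1) + L n)
    (hF0 : F 0 = 0) (hF1 : F 1 = 1)
    (hFrec : ∀ n : ℕ, F (n + 2) = Polynomial.X * F (n + 1) + F n)
    (c : PowerSeries ℝ) (hc0 : constantCoeff c = 1)
    (hc : (2 * c - 1) ^ 2 = 1 + 4 * X ^ 2) :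
    ∀ n : ℕ,
      c ^ n = (1 / 2 : ℝ) •
          (((Polynomial.reflect n (L n) : Polynomial ℝ) : PowerSeries ℝ)
            + ((Polynomial.reflect n (F n) : Polynomial ℝ) : PowerSeries ℝ))
        + (1 / 2 : ℝ) •
          (((Polynomial.reflect (n - 1) (F n) : Polynomial ℝ) : PowerSeries ℝ)
            * (2 * c - 1 - X)) := by
  -- degree bounds
  have hLdeg : ∀ n, (L n).natDegree ≤ n := by
    intro n
    induction n using Nat.twoStepInduction with
    | zero => simp [hL0]
    | one => simp [hL1]
    | more n ih1 ih2 =>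
      rw [hLrec]
      have h1 : (Polynomial.X * L (n + 1)).natDegree ≤ n + 2 := by
        refine Polynomial.natDegree_mul_le.trans ?_
        have := Polynomial.natDegree_X_le (R := ℝ)
        omega
      exact (Polynomial.natDegree_add_le _ _).trans (max_le h1 (ih1.trans (by omega)))
  have hFdeg : ∀ n, (F n).natDegree ≤ n - 1 := by
    intro n
    induction n using Nat.twoStepInduction with
    | zero => simp [hF0]
    | one => simp [hF1]
    | more n ih1 ih2 =>
      rw [hFrec]
      have h1 : (Polynomial.X * F (n + 1)).natDegree ≤ n + 1 := by
        refine Polynomial.natDegree_mul_le.trans ?_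
        have := Polynomial.natDegree_X_le (R := ℝ)
        omega
      exact (Polynomial.natDegree_add_le _ _).trans (max_le h1 (ih1.trans (by omega)))
  have hFdeg' : ∀ n, (F n).natDegree ≤ n := fun n => (hFdeg n).trans (by omega)
  -- c^2 = c + X^2
  have h4 : (4 : PowerSeries ℝ) * (c ^ 2 - c - X ^ 2) = 0 := by linear_combination hc
  have h4ne : (4 : PowerSeries ℝ) ≠ 0 := by
    intro h
    have := congrArg (constantCoeff (R := ℝ)) h
    rw [map_ofNat, map_zero] at this
    norm_num at this
  have hc2 : c ^ 2 = c + X ^ 2 := by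
    rcases mul_eq_zero.mp h4 with h | h
    · exact absurd h h4ne
    · linear_combination h
  intro n
  induction n using Nat.twoStepInduction with
  | zero =>
    simp only [hL0, hF0, Polynomial.reflect_zero, pow_zero]
    rw [show (2 : Polynomial ℝ) = Polynomial.C 2 from (map_ofNat Polynomial.C 2).symm,
      Polynomial.reflect_C]
    simp [smul_eq_C_mul, ← map_mul]
  | one =>
    have h2C : ((2 : ℝ⟦X⟧)) = PowerSeries.C (R := ℝ) 2 := by
      rw [map_ofNat]
    have htwo : PowerSeries.C (R := ℝ) (1 / 2) * 2 = 1 := by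
      rw [h2C, ← map_mul]
      norm_num
    simp only [hL1, hF1, pow_one]
    rw [show (1 : ℕ) - 1 = 0 from rfl, Polynomial.reflect_one_X, reflect_one',
      reflect_one']
    push_cast
    simp only [pow_zero, pow_one, Polynomial.coe_one, smul_eq_C_mul]
    linear_combination (-c) * htwo
  | more n ih1 ih2 =>
    -- reversed recurrences
    have hLr : Polynomial.reflect (n + 2) (L (n + 2))
        = Polynomial.reflect (n + 1) (L (n + 1))
          + Polynomial.X ^ 2 * Polynomial.reflect n (L n) := by
      rw [hLrec, Polynomial.reflect_add, reflect_X_mul _ _ (hLdeg (n + 1)),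
        reflect_shift _ _ (hLdeg n)]
    have hFr : Polynomial.reflect (n + 2) (F (n + 2))
        = Polynomial.reflect (n + 1) (F (n + 1))
          + Polynomial.X ^ 2 * Polynomial.reflect n (F n) := by
      rw [hFrec, Polynomial.reflect_add, reflect_X_mul _ _ (hFdeg' (n + 1)),
        reflect_shift _ _ (hFdeg' n)]
    have hPsi : Polynomial.reflect (n + 2 - 1) (F (n + 2))
        = Polynomial.reflect (n + 1 - 1) (F (n + 1))
          + Polynomial.X ^ 2 * Polynomial.reflect (n - 1) (F n) := by
      rw [show n + 2 - 1 = n + 1 from rfl, show n + 1 - 1 = n from rfl,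
        hFrec, Polynomial.reflect_add, reflect_X_mul _ _ (hFdeg (n + 1) |>.trans (by omega))]
      congr 1
      rcases n with _ | m
      · simp [hF0]
      · rw [show m + 1 + 1 = (m + 1 - 1) + 2 from rfl]
        exact reflect_shift _ _ (hFdeg (m + 1))
    have hcpow : c ^ (n + 2) = c ^ (n + 1) + X ^ 2 * c ^ n := by
      calc c ^ (n + 2) = c ^ 2 * c ^ n := by ring
      _ = (c + X ^ 2) * c ^ n := by rw [hc2]
      _ = c ^ (n + 1) + X ^ 2 * c ^ n := by ring
    rw [hcpow, ih1, ih2, hLr, hFr, hPsi]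
    push_cast
    simp only [smul_eq_C_mul]
    ring
end

section
/- Let A and B be the infinite lower/upper triangular matrices whose even columns come from ((2+x)/(1+x), x²/(1+x)) resp. (1, x(1+x)) and odd columns from (x/(1+x), x²/(1+x)) resp. (1+2x, x(1+x)). Concretely: A x^{2n} = (2+x)/(1+x) · (x²/(1+x))^n, A x^{2n+1} = x/(1+x) · (x²/(1+x))^n (as power series), and B x^{2n} = x^n(1+x)^n, B x^{2n+1} = (1+2x)·x^n(1+x)^n (as polynomials, read as row/column generating functions). Then the pairing (A x^n | B x^m) := ∑_k [x^k](A x^n)·[x^k](B x^m) satisfies (A x^n | B x^m) = 2·δ_{n,m} for all n, m ≥ 0. -/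
section Poly
open Polynomial
lemma e1 : (1+X:ℚ[X]) = X + C 1 := by rw [C_1, add_comm]
lemma e2 : (1+2*X:ℚ[X]) = C 2 * X + C 1 := by
  have : (C 2 : ℚ[X]) = 2 := by norm_cast
  rw [C_1, this]; ring
lemma d1 : (1+X:ℚ[X]).natDegree = 1 := by rw [e1]; exact natDegree_X_add_C _
lemma d2 : (1+2*X:ℚ[X]).natDegree = 1 := by rw [e2]; exact natDegree_linear (by norm_num)
lemma r1 : ((1+X:ℚ[X])).reverse = 1+X := by
  ext n
  rw [coeff_reverse, d1]
  rcases n with _|_|n <;> simp [revAt_le, revAt_eq_self_of_lt, coeff_one, coeff_X]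
lemma r2 : ((1+2*X:ℚ[X])).reverse = 2+X := by
  ext n
  rw [coeff_reverse, d2]
  rcases n with _|_|n <;> simp [revAt_le, revAt_eq_self_of_lt, coeff_one, coeff_X]

lemma ne1 : (1+X:ℚ[X]) ≠ 0 := fun h => by simpa using congrArg (fun p => coeff p 0) h
lemma ne2 : (1+2*X:ℚ[X]) ≠ 0 := fun h => by simpa using congrArg (fun p => coeff p 0) h

lemma dB0 (b : ℕ) : ((X*(1+X))^b : ℚ[X]).natDegree = 2*b := by
  rw [natDegree_pow, natDegree_mul X_ne_zero ne1, natDegree_X, d1]; ring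
lemma dB1 (b : ℕ) : ((1+2*X)*(X*(1+X))^b : ℚ[X]).natDegree = 2*b+1 := by
  rw [natDegree_mul ne2 (pow_ne_zero _ (mul_ne_zero X_ne_zero ne1)), d2, dB0]; ring
lemma rB0 (b : ℕ) : ((X*(1+X))^b : ℚ[X]).reverse = (1+X)^b := by
  induction b with
  | zero => rw [pow_zero, pow_zero, ← Polynomial.C_1, Polynomial.reverse_C]
  | succ b ih =>
    have h : ((X*(1+X))^(b+1) : ℚ[X]) = X * ((1+X) * (X*(1+X))^b) := by ring
    rw [h, reverse_X_mul, reverse_mul_of_domain, r1, ih, pow_succ]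
    ring
lemma rB1 (b : ℕ) : (((1+2*X)*(X*(1+X))^b : ℚ[X])).reverse = (2+X)*(1+X)^b := by
  rw [reverse_mul_of_domain, r2, rB0]
lemma deg2 : (2+Polynomial.X : Polynomial ℚ).natDegree ≤ 1 :=
  (Polynomial.natDegree_add_le _ _).trans (by simp)
lemma degP (t : ℕ) : ((1+Polynomial.X)^t : Polynomial ℚ).natDegree ≤ t := by
  refine Polynomial.natDegree_pow_le.trans ?_
  have : (1+Polynomial.X : Polynomial ℚ).natDegree ≤ 1 :=
    (Polynomial.natDegree_add_le _ _).trans (by simp)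
  nlinarith
end Poly

open PowerSeries

/-- pairing as a coefficient of product with the reverse -/
lemma pair_eq (a : PowerSeries ℚ) (c : Polynomial ℚ) :
    (∑ k ∈ c.support, coeff k a * c.coeff k)
      = coeff c.natDegree (a * (c.reverse : PowerSeries ℚ)) := by
  set N := c.natDegree with hN
  have h1 : (∑ k ∈ c.support, coeff k a * c.coeff k)
      = ∑ k ∈ Finset.range (N+1), coeff k a * c.coeff k := by
    apply Finset.sum_subset
    · intro k hk
      rw [Finset.mem_range, Nat.lt_succ_iff]
      exact Polynomial.le_natDegree_of_mem_supp k hk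
    · intro k _ hk
      rw [Polynomial.notMem_support_iff.mp hk, mul_zero]
  rw [h1, coeff_mul, Finset.Nat.sum_antidiagonal_eq_sum_range_succ_mk]
  refine Finset.sum_congr rfl fun k hk => ?_
  have hkN : k ≤ N := Nat.lt_succ_iff.mp (Finset.mem_range.mp hk)
  rw [Polynomial.coeff_coe, Polynomial.coeff_reverse,
    Polynomial.revAt_le (by omega : N - k ≤ c.natDegree)]
  congr 2
  omega

lemma hI : ((1+X:ℚ⟦X⟧)) * (1+X)⁻¹ = 1 :=
  PowerSeries.mul_inv_cancel _ (by simp)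

lemma hpowI (j : ℕ) : ((1+X)^j * ((1+X)⁻¹)^j : ℚ⟦X⟧) = 1 := by
  rw [← mul_pow, hI, one_pow]

lemma collapseEq (a : ℕ) : ((1+X)^a * ((1+X)⁻¹)^(a+1) : ℚ⟦X⟧) = (1+X)⁻¹ := by
  rw [pow_succ, ← mul_assoc, hpowI, one_mul]

lemma collapse_gt (a t : ℕ) :
    ((1+X)^(a+1+t) * ((1+X)⁻¹)^(a+1) : ℚ⟦X⟧) = (1+X)^t := by
  rw [pow_add, mul_comm ((1+X:ℚ⟦X⟧)^(a+1)) _, mul_assoc, hpowI, mul_one]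

lemma I0 : coeff 0 ((1+X:ℚ⟦X⟧)⁻¹) = 1 := by
  rw [coeff_zero_eq_constantCoeff, PowerSeries.constantCoeff_inv]
  simp

lemma I1 : coeff 1 ((1+X:ℚ⟦X⟧)⁻¹) = -1 := by
  have h := congrArg (coeff 1) hI
  rw [coeff_mul, Finset.Nat.sum_antidiagonal_eq_sum_range_succ_mk] at h
  simp [Finset.sum_range_succ, I0] at h
  linarith

lemma K0 : coeff 0 ((2+X) * (1+X)⁻¹ : ℚ⟦X⟧) = 2 := by
  rw [coeff_zero_eq_constantCoeff, map_mul]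
  have : constantCoeff ((1+X:ℚ⟦X⟧)⁻¹) = 1 := by
    rw [PowerSeries.constantCoeff_inv]; simp
  rw [this, mul_one, map_add, map_ofNat, constantCoeff_X, add_zero]

lemma K1 : coeff 1 ((2+X)*(2+X) * (1+X)⁻¹ : ℚ⟦X⟧) = 0 := by
  have e : ((2+X)*(2+X) * (1+X)⁻¹ : ℚ⟦X⟧)
      = (3+X)*((1+X)*(1+X)⁻¹) + (1+X)⁻¹ := by ring
  rw [e, hI, mul_one, map_add, I1]
  rw [show (3:ℚ⟦X⟧) = C 3 by rw [map_ofNat], map_add, coeff_C, coeff_X]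
  norm_num

lemma cast2 : ((2:Polynomial ℚ) : ℚ⟦X⟧) = 2 := by
  rw [show (2:Polynomial ℚ) = Polynomial.C 2 by norm_cast, Polynomial.coe_C, map_ofNat]

lemma castB0 (b : ℕ) : (((1+Polynomial.X)^b : Polynomial ℚ) : ℚ⟦X⟧) = (1+X)^b := by
  push_cast; rfl
lemma castA (t : ℕ) : (((2+Polynomial.X)*(1+Polynomial.X)^t : Polynomial ℚ) : ℚ⟦X⟧)
    = (2+X)*(1+X)^t := by
  push_cast [cast2]; rfl
lemma castC (t : ℕ) :
    (((2+Polynomial.X)*(2+Polynomial.X)*(1+Polynomial.X)^t : Polynomial ℚ) : ℚ⟦X⟧)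
    = (2+X)*(2+X)*(1+X)^t := by
  push_cast [cast2]; rfl

lemma coe_coeff_zero (p : Polynomial ℚ) {k : ℕ} (h : p.natDegree < k) :
    coeff k (p : ℚ⟦X⟧) = 0 := by
  rw [Polynomial.coeff_coe]
  exact Polynomial.coeff_eq_zero_of_natDegree_lt h

lemma shape0 (g w : ℚ⟦X⟧) (a : ℕ) :
    g * (1+X)⁻¹ * (X^2*(1+X)⁻¹)^a * w
      = X^(2*a) * (g * (w * ((1+X)⁻¹)^(a+1))) := by
  rw [mul_pow, ← pow_mul]; ring

lemma shape0' (g h w : ℚ⟦X⟧) (a : ℕ) :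
    g * (1+X)⁻¹ * (X^2*(1+X)⁻¹)^a * (h*w)
      = X^(2*a) * ((g*h) * (w * ((1+X)⁻¹)^(a+1))) := by
  rw [mul_pow, ← pow_mul]; ring

lemma shape1 (w : ℚ⟦X⟧) (a : ℕ) :
    X * (1+X)⁻¹ * (X^2*(1+X)⁻¹)^a * w
      = X^(2*a+1) * (w * ((1+X)⁻¹)^(a+1)) := by
  rw [mul_pow, ← pow_mul, pow_succ]; ring

lemma shape1' (h w : ℚ⟦X⟧) (a : ℕ) :
    X * (1+X)⁻¹ * (X^2*(1+X)⁻¹)^a * (h*w)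
      = X^(2*a+1) * (h * (w * ((1+X)⁻¹)^(a+1))) := by
  rw [mul_pow, ← pow_mul, pow_succ]; ring

/-- Biorthogonality of the Fibonacci bases: with
`A x^{2n} = (2+x)/(1+x)·(x²/(1+x))ⁿ`, `A x^{2n+1} = x/(1+x)·(x²/(1+x))ⁿ`
(formal power series over ℚ) and
`B x^{2n} = (x(1+x))ⁿ`, `B x^{2n+1} = (1+2x)(x(1+x))ⁿ` (polynomials),
the pairing `(a|c) = ∑ₖ aₖcₖ` satisfies `(A xⁿ | B xᵐ) = 2δₙₘ`. -/
theorem stmt18 (A : ℕ → PowerSeries ℚ) (B : ℕ → Polynomial ℚ)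
    (hA0 : ∀ n : ℕ, A (2 * n) = (2 + X) * (1 + X)⁻¹ * (X ^ 2 * (1 + X)⁻¹) ^ n)
    (hA1 : ∀ n : ℕ, A (2 * n + 1) = X * (1 + X)⁻¹ * (X ^ 2 * (1 + X)⁻¹) ^ n)
    (hB0 : ∀ n : ℕ, B (2 * n) = (Polynomial.X * (1 + Polynomial.X)) ^ n)
    (hB1 : ∀ n : ℕ, B (2 * n + 1)
      = (1 + 2 * Polynomial.X) * (Polynomial.X * (1 + Polynomial.X)) ^ n) :
    ∀ n m : ℕ,
      (∑ k ∈ (B m).support, coeff k (A n) * (B m).coeff k)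
        = if n = m then 2 else 0 := by
  intro n m
  rcases n.even_or_odd with hn | hn
  · obtain ⟨a, rfl⟩ : ∃ a, n = 2 * a := by obtain ⟨a, ha⟩ := hn; exact ⟨a, by omega⟩
    rcases m.even_or_odd with hm | hm
    · obtain ⟨b, rfl⟩ : ∃ b, m = 2 * b := by obtain ⟨b, hb⟩ := hm; exact ⟨b, by omega⟩
      rw [pair_eq, hB0 b, hA0 a, dB0, rB0, castB0, shape0, coeff_X_pow_mul']
      rcases lt_trichotomy a b with h | rfl | h
      · obtain ⟨t, rfl⟩ : ∃ t, b = a+1+t := ⟨b - (a+1), by omega⟩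
        rw [if_pos (by omega), collapse_gt,
          show 2*(a+1+t) - 2*a = 2*t+2 from by omega, ← castA t,
          coe_coeff_zero _ (lt_of_le_of_lt
            (Polynomial.natDegree_mul_le.trans (add_le_add deg2 (degP t))) (by omega)),
          if_neg (by omega)]
      · rw [if_pos le_rfl, collapseEq, Nat.sub_self, K0, if_pos rfl]
      · rw [if_neg (by omega), if_neg (by omega)]
    · obtain ⟨b, rfl⟩ := hm
      rw [pair_eq, hB1 b, hA0 a, dB1, rB1, castA b, shape0', coeff_X_pow_mul']
      rcases lt_trichotomy a b with h | rfl | h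
      · obtain ⟨t, rfl⟩ : ∃ t, b = a+1+t := ⟨b - (a+1), by omega⟩
        rw [if_pos (by omega), collapse_gt,
          show 2*(a+1+t)+1 - 2*a = 2*t+3 from by omega, ← castC t,
          coe_coeff_zero _ (lt_of_le_of_lt
            (Polynomial.natDegree_mul_le.trans (add_le_add
              (Polynomial.natDegree_mul_le.trans (add_le_add deg2 deg2)) (degP t)))
            (by omega)),
          if_neg (by omega)]
      · rw [if_pos (by omega), collapseEq,
          show 2*a+1 - 2*a = 1 from by omega, K1, if_neg (by omega)]
      · rw [if_neg (by omega), if_neg (by omega)]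
  · obtain ⟨a, rfl⟩ := hn
    rcases m.even_or_odd with hm | hm
    · obtain ⟨b, rfl⟩ : ∃ b, m = 2 * b := by obtain ⟨b, hb⟩ := hm; exact ⟨b, by omega⟩
      rw [pair_eq, hB0 b, hA1 a, dB0, rB0, castB0, shape1, coeff_X_pow_mul']
      rcases le_or_gt b a with h | h
      · rw [if_neg (by omega), if_neg (by omega)]
      · obtain ⟨t, rfl⟩ : ∃ t, b = a+1+t := ⟨b - (a+1), by omega⟩
        rw [if_pos (by omega), collapse_gt,
          show 2*(a+1+t) - (2*a+1) = 2*t+1 from by omega, ← castB0 t,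
          coe_coeff_zero _ (lt_of_le_of_lt (degP t) (by omega)),
          if_neg (by omega)]
    · obtain ⟨b, rfl⟩ := hm
      rw [pair_eq, hB1 b, hA1 a, dB1, rB1, castA b, shape1', coeff_X_pow_mul']
      rcases lt_trichotomy a b with h | rfl | h
      · obtain ⟨t, rfl⟩ : ∃ t, b = a+1+t := ⟨b - (a+1), by omega⟩
        rw [if_pos (by omega), collapse_gt,
          show 2*(a+1+t)+1 - (2*a+1) = 2*t+2 from by omega, ← castA t,
          coe_coeff_zero _ (lt_of_le_of_lt
            (Polynomial.natDegree_mul_le.trans (add_le_add deg2 (degP t))) (by omega)),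
          if_neg (by omega)]
      · rw [if_pos (by omega), collapseEq,
          show 2*a+1 - (2*a+1) = 0 from by omega, K0, if_pos rfl]
      · rw [if_neg (by omega), if_neg (by omega)]
end

section
/- For parameters φ, β define B_{(φ,β)} x^{2n} = (β + φx + x²)^n and B_{(φ,β)} x^{2n+1} = (φ/2 + x)(β + φx + x²)^n (polynomials), and A_{(φ,β)} x^{2n} = (1 + (φ/2)x)·x^{2n}/(1+φx+βx²)^{n+1}, A_{(φ,β)} x^{2n+1} = x^{2n+1}/(1+φx+βx²)^{n+1} (formal power series). Then the pairing (a|c) = ∑_k a_k c_k satisfies (A_{(φ,β)} x^n | B_{(φ,β)} x^m) = δ_{n,m} for all n, m ≥ 0. -/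
open PowerSeries

lemma pairing_eq19 (a : PowerSeries ℚ) (p : Polynomial ℚ) (d : ℕ) (hd : p.natDegree ≤ d) :
    (∑ k ∈ p.support, coeff k a * p.coeff k)
      = coeff d (a * ((p.reflect d : Polynomial ℚ) : PowerSeries ℚ)) := by
  rw [coeff_mul, Finset.Nat.sum_antidiagonal_eq_sum_range_succ_mk]
  have h1 : ∀ k ∈ Finset.range (d+1),
      coeff k a * coeff (d - k) ((p.reflect d : Polynomial ℚ) : PowerSeries ℚ)
        = coeff k a * p.coeff k := by
    intro k hk
    simp only [Finset.mem_range] at hk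
    rw [Polynomial.coeff_coe, Polynomial.coeff_reflect,
      Polynomial.revAt_le (Nat.sub_le d k)]
    congr 2
    omega
  rw [Finset.sum_congr rfl h1]
  refine Finset.sum_subset ?_ ?_
  · intro k hk
    simp only [Finset.mem_range]
    have := Polynomial.le_natDegree_of_mem_supp k hk
    omega
  · intro k _ hk
    rw [Polynomial.notMem_support_iff.mp hk, mul_zero]

lemma reflect2_Q19 (φ β : ℚ) :
    (Polynomial.C β + Polynomial.C φ * Polynomial.X + Polynomial.X ^ 2).reflect 2
      = 1 + Polynomial.C φ * Polynomial.X + Polynomial.C β * Polynomial.X ^ 2 := by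
  ext i
  rw [Polynomial.coeff_reflect]
  rcases i with _ | _ | _ | i
  · rw [Polynomial.revAt_le (by omega)]
    simp [Polynomial.coeff_one]
  · rw [Polynomial.revAt_le (by omega)]
    simp [Polynomial.coeff_one]
  · rw [Polynomial.revAt_le (by omega)]
    simp [Polynomial.coeff_one]
  · rw [Polynomial.revAt_eq_self_of_lt (by omega)]
    simp [Polynomial.coeff_X, Polynomial.coeff_one]

lemma reflect1_E19 (φ : ℚ) :
    (Polynomial.C (φ / 2) + Polynomial.X).reflect 1
      = 1 + Polynomial.C (φ / 2) * Polynomial.X := by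
  ext i
  rw [Polynomial.coeff_reflect]
  rcases i with _ | _ | i
  · rw [Polynomial.revAt_le (by omega)]
    simp [Polynomial.coeff_one]
  · rw [Polynomial.revAt_le (by omega)]
    simp [Polynomial.coeff_one]
  · rw [Polynomial.revAt_eq_self_of_lt (by omega)]
    simp [Polynomial.coeff_X, Polynomial.coeff_one]

variable (φ β : ℚ)

lemma natDegree_Q19 : (Polynomial.C β + Polynomial.C φ * Polynomial.X + Polynomial.X ^ 2).natDegree ≤ 2 := by
  compute_degree

lemma natDegree_Qpow19 (b : ℕ) :
    ((Polynomial.C β + Polynomial.C φ * Polynomial.X + Polynomial.X ^ 2) ^ b).natDegree ≤ 2 * b := by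
  refine le_trans (Polynomial.natDegree_pow_le) ?_
  have := natDegree_Q19 φ β
  nlinarith

lemma reflect_pow_Q19 (b : ℕ) :
    ((Polynomial.C β + Polynomial.C φ * Polynomial.X + Polynomial.X ^ 2) ^ b).reflect (2 * b)
      = (1 + Polynomial.C φ * Polynomial.X + Polynomial.C β * Polynomial.X ^ 2) ^ b := by
  induction b with
  | zero => simp [Polynomial.reflect_one]
  | succ b ih =>
    rw [pow_succ, show 2 * (b + 1) = 2 * b + 2 by ring,
      Polynomial.reflect_mul _ _ (natDegree_Qpow19 φ β b) (natDegree_Q19 φ β), ih,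
      reflect2_Q19]
    ring

lemma reflect_odd_19 (b : ℕ) :
    ((Polynomial.C (φ / 2) + Polynomial.X)
        * (Polynomial.C β + Polynomial.C φ * Polynomial.X + Polynomial.X ^ 2) ^ b).reflect (2 * b + 1)
      = (1 + Polynomial.C (φ / 2) * Polynomial.X)
          * (1 + Polynomial.C φ * Polynomial.X + Polynomial.C β * Polynomial.X ^ 2) ^ b := by
  rw [show 2 * b + 1 = 1 + 2 * b by ring,
    Polynomial.reflect_mul _ _ (by compute_degree) (natDegree_Qpow19 φ β b),
    reflect1_E19, reflect_pow_Q19]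

variable (φ β : ℚ)

local notation "Qs" => (1 + C φ * X + C β * X ^ 2 : PowerSeries ℚ)

lemma Qs_const19 : constantCoeff (1 + C φ * X + C β * X ^ 2 : PowerSeries ℚ) = 1 := by
  simp

lemma Qs_inv_mul19 : (Qs)⁻¹ * Qs = 1 :=
  PowerSeries.inv_mul_cancel _ (by rw [Qs_const19]; norm_num)

lemma Qs_cancel19 {a b : ℕ} (h : a ≤ b) : ((Qs)⁻¹) ^ a * Qs ^ b = Qs ^ (b - a) := by
  have hb : (Qs : PowerSeries ℚ) ^ b = Qs ^ a * Qs ^ (b - a) := by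
    rw [← pow_add]; congr 1; omega
  rw [hb, ← mul_assoc, ← mul_pow, Qs_inv_mul19, one_pow, one_mul]

lemma coeff_Xpow_mul_zero19 (f : PowerSeries ℚ) {k j : ℕ} (h : j < k) :
    coeff j (X ^ k * f) = 0 := by
  rw [mul_comm, coeff_mul_X_pow']
  simp [Nat.not_le.mpr h]

lemma coeff_one_mul19 (f g : PowerSeries ℚ) :
    coeff 1 (f * g) = coeff 0 f * coeff 1 g + coeff 1 f * coeff 0 g := by
  rw [coeff_mul, Finset.Nat.sum_antidiagonal_eq_sum_range_succ_mk]
  simp [Finset.sum_range_succ]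

lemma Qs_inv_coeff0_19 : coeff 0 ((Qs)⁻¹) = 1 := by
  rw [coeff_zero_eq_constantCoeff, PowerSeries.constantCoeff_inv, Qs_const19]
  norm_num

lemma Qs_inv_coeff1_19 : coeff 1 ((Qs)⁻¹) = -φ := by
  have h := congrArg (coeff 1) (Qs_inv_mul19 φ β)
  rw [coeff_one_mul19, Qs_inv_coeff0_19] at h
  simp [PowerSeries.coeff_X_pow] at h
  linarith

lemma E1_19 : coeff 0 ((1 + C (φ / 2) * X) * (Qs)⁻¹) = 1 := by
  rw [coeff_zero_eq_constantCoeff, map_mul]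
  simp [PowerSeries.constantCoeff_inv, Qs_const19]

lemma E2_19 : coeff 1 ((1 + C (φ / 2) * X) ^ 2 * (Qs)⁻¹) = 0 := by
  rw [coeff_one_mul19, Qs_inv_coeff0_19, Qs_inv_coeff1_19, sq, coeff_one_mul19]
  simp
lemma natDegree_R19 (φ β : ℚ) :
    (1 + Polynomial.C φ * Polynomial.X + Polynomial.C β * Polynomial.X ^ 2).natDegree ≤ 2 := by
  compute_degree

lemma deg_bound19 (φ β : ℚ) (p : Polynomial ℚ) (dp a k : ℕ) (hp : p.natDegree ≤ dp) :
    (p * Polynomial.X ^ a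
        * (1 + Polynomial.C φ * Polynomial.X + Polynomial.C β * Polynomial.X ^ 2) ^ k).natDegree
      ≤ dp + a + 2 * k := by
  refine le_trans (Polynomial.natDegree_mul_le) (add_le_add ?_ ?_)
  · refine le_trans (Polynomial.natDegree_mul_le) (add_le_add hp ?_)
    simp [Polynomial.natDegree_X_pow]
  · refine le_trans (Polynomial.natDegree_pow_le) ?_
    have := natDegree_R19 φ β
    nlinarith

lemma coe_coeff_zero19 (p : Polynomial ℚ) {m : ℕ} (h : p.natDegree < m) :
    coeff m (p : PowerSeries ℚ) = 0 := by
  rw [Polynomial.coeff_coe]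
  exact Polynomial.coeff_eq_zero_of_natDegree_lt h

lemma coeff_Xpow_mul_self19 (f : PowerSeries ℚ) (k : ℕ) :
    coeff k (X ^ k * f) = coeff 0 f := by
  rw [mul_comm, coeff_mul_X_pow']
  simp

lemma coeff_Xpow_mul_add19 (f : PowerSeries ℚ) (k j : ℕ) :
    coeff (k + j) (X ^ k * f) = coeff j f := by
  rw [mul_comm, coeff_mul_X_pow', if_pos (Nat.le_add_right k j), Nat.add_sub_cancel_left]

/-- Biorthogonality of the generalized Fibonacci bases: with
`A_{(φ,β)} x^{2n} = (1+(φ/2)x)·x^{2n}/(1+φx+βx²)^{n+1}`,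
`A_{(φ,β)} x^{2n+1} = x^{2n+1}/(1+φx+βx²)^{n+1}` (power series over ℚ) and
`B_{(φ,β)} x^{2n} = (β+φx+x²)ⁿ`, `B_{(φ,β)} x^{2n+1} = (φ/2+x)(β+φx+x²)ⁿ`
(polynomials), the pairing `(a|c) = ∑ₖ aₖcₖ` satisfies
`(A_{(φ,β)} xⁿ | B_{(φ,β)} xᵐ) = δₙₘ`. -/
theorem stmt19 (φ β : ℚ) (A : ℕ → PowerSeries ℚ) (B : ℕ → Polynomial ℚ)
    (hA0 : ∀ n : ℕ, A (2 * n)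
      = (1 + C (φ / 2) * X) * X ^ (2 * n)
          * ((1 + C φ * X + C β * X ^ 2)⁻¹) ^ (n + 1))
    (hA1 : ∀ n : ℕ, A (2 * n + 1)
      = X ^ (2 * n + 1) * ((1 + C φ * X + C β * X ^ 2)⁻¹) ^ (n + 1))
    (hB0 : ∀ n : ℕ, B (2 * n)
      = (Polynomial.C β + Polynomial.C φ * Polynomial.X + Polynomial.X ^ 2) ^ n)
    (hB1 : ∀ n : ℕ, B (2 * n + 1)
      = (Polynomial.C (φ / 2) + Polynomial.X)
          * (Polynomial.C β + Polynomial.C φ * Polynomial.X + Polynomial.X ^ 2) ^ n) :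
    ∀ n m : ℕ,
      (∑ k ∈ (B m).support, coeff k (A n) * (B m).coeff k)
        = if n = m then 1 else 0 := by
  intro n m
  set Qq : PowerSeries ℚ := 1 + C φ * X + C β * X ^ 2 with hQq
  have hinv1 : ∀ a : ℕ, (Qq⁻¹) ^ (a + 1) * Qq ^ a = Qq⁻¹ := by
    intro a
    rw [pow_succ', mul_assoc, Qs_cancel19 φ β (le_refl a), Nat.sub_self, pow_zero, mul_one]
  obtain ⟨a, ha | ha⟩ := Nat.even_or_odd' n <;> obtain ⟨b, hb | hb⟩ := Nat.even_or_odd' m <;>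
    subst ha hb
  · -- n = 2a, m = 2b
    rw [pairing_eq19 (A (2*a)) (B (2*b)) (2*b)
        (by rw [hB0]; exact natDegree_Qpow19 φ β b),
      hB0 b, reflect_pow_Q19, hA0]
    have hcoe : (((1 + Polynomial.C φ * Polynomial.X + Polynomial.C β * Polynomial.X ^ 2) ^ b :
        Polynomial ℚ) : PowerSeries ℚ) = Qq ^ b := by
      push_cast
      try rw [hQq]
    rw [hcoe]
    rcases lt_trichotomy a b with h | h | h
    · rw [if_neg (by omega)]
      have hx : (1 + C (φ/2) * X) * X ^ (2*a) * (Qq⁻¹) ^ (a+1) * Qq ^ b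
          = ((1 + C (φ/2) * X) * X ^ (2*a)) * ((Qq⁻¹) ^ (a+1) * Qq ^ b) := by ring
      rw [hx, Qs_cancel19 φ β (by omega)]
      have hy : ((1 + C (φ/2) * X) * X ^ (2*a)) * Qq ^ (b - (a+1))
          = (((1 + Polynomial.C (φ/2) * Polynomial.X) * Polynomial.X ^ (2*a)
              * (1 + Polynomial.C φ * Polynomial.X + Polynomial.C β * Polynomial.X ^ 2) ^ (b - (a+1)) :
              Polynomial ℚ) : PowerSeries ℚ) := by
        push_cast
        try rw [hQq]
        try ring
      rw [hy]
      refine coe_coeff_zero19 _ (lt_of_le_of_lt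
        (deg_bound19 φ β _ 1 (2*a) (b - (a+1)) (by compute_degree)) (by omega))
    · subst h
      rw [if_pos rfl]
      have hx : (1 + C (φ/2) * X) * X ^ (2*a) * (Qq⁻¹) ^ (a+1) * Qq ^ a
          = X ^ (2*a) * ((1 + C (φ/2) * X) * ((Qq⁻¹) ^ (a+1) * Qq ^ a)) := by ring
      rw [hx, hinv1, coeff_Xpow_mul_self19]
      exact E1_19 φ β
    · rw [if_neg (by omega)]
      have hx : (1 + C (φ/2) * X) * X ^ (2*a) * (Qq⁻¹) ^ (a+1) * Qq ^ b
          = X ^ (2*a) * ((1 + C (φ/2) * X) * ((Qq⁻¹) ^ (a+1) * Qq ^ b)) := by ring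
      rw [hx]
      exact coeff_Xpow_mul_zero19 _ (by omega)
  · -- n = 2a, m = 2b+1
    rw [pairing_eq19 (A (2*a)) (B (2*b+1)) (2*b+1)
        (by
          rw [hB1]
          refine le_trans (Polynomial.natDegree_mul_le) (le_trans (add_le_add
            (show (Polynomial.C (φ/2) + Polynomial.X).natDegree ≤ 1 by compute_degree)
            (natDegree_Qpow19 φ β b)) (by omega))),
      hB1 b, reflect_odd_19, hA0]
    have hcoe : (((1 + Polynomial.C (φ/2) * Polynomial.X)
        * (1 + Polynomial.C φ * Polynomial.X + Polynomial.C β * Polynomial.X ^ 2) ^ b :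
        Polynomial ℚ) : PowerSeries ℚ) = (1 + C (φ/2) * X) * Qq ^ b := by
      push_cast
      try rw [hQq]
    rw [hcoe, if_neg (by omega)]
    rcases lt_trichotomy a b with h | h | h
    · have hx : (1 + C (φ/2) * X) * X ^ (2*a) * (Qq⁻¹) ^ (a+1)
            * ((1 + C (φ/2) * X) * Qq ^ b)
          = ((1 + C (φ/2) * X) ^ 2 * X ^ (2*a)) * ((Qq⁻¹) ^ (a+1) * Qq ^ b) := by ring
      rw [hx, Qs_cancel19 φ β (by omega)]
      have hy : ((1 + C (φ/2) * X) ^ 2 * X ^ (2*a)) * Qq ^ (b - (a+1))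
          = (((1 + Polynomial.C (φ/2) * Polynomial.X) ^ 2 * Polynomial.X ^ (2*a)
              * (1 + Polynomial.C φ * Polynomial.X + Polynomial.C β * Polynomial.X ^ 2) ^ (b - (a+1)) :
              Polynomial ℚ) : PowerSeries ℚ) := by
        push_cast
        try rw [hQq]
        try ring
      rw [hy]
      refine coe_coeff_zero19 _ (lt_of_le_of_lt
        (deg_bound19 φ β _ 2 (2*a) (b - (a+1)) (by compute_degree)) (by omega))
    · subst h
      have hx : (1 + C (φ/2) * X) * X ^ (2*a) * (Qq⁻¹) ^ (a+1)
            * ((1 + C (φ/2) * X) * Qq ^ a)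
          = X ^ (2*a) * ((1 + C (φ/2) * X) ^ 2 * ((Qq⁻¹) ^ (a+1) * Qq ^ a)) := by ring
      rw [hx, hinv1, coeff_Xpow_mul_add19]
      exact E2_19 φ β
    · have hx : (1 + C (φ/2) * X) * X ^ (2*a) * (Qq⁻¹) ^ (a+1)
            * ((1 + C (φ/2) * X) * Qq ^ b)
          = X ^ (2*a) * ((1 + C (φ/2) * X) ^ 2 * ((Qq⁻¹) ^ (a+1) * Qq ^ b)) := by ring
      rw [hx]
      exact coeff_Xpow_mul_zero19 _ (by omega)
  · -- n = 2a+1, m = 2b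
    rw [pairing_eq19 (A (2*a+1)) (B (2*b)) (2*b)
        (by rw [hB0]; exact natDegree_Qpow19 φ β b),
      hB0 b, reflect_pow_Q19, hA1]
    have hcoe : (((1 + Polynomial.C φ * Polynomial.X + Polynomial.C β * Polynomial.X ^ 2) ^ b :
        Polynomial ℚ) : PowerSeries ℚ) = Qq ^ b := by
      push_cast
      try rw [hQq]
    rw [hcoe, if_neg (by omega)]
    rcases le_or_gt b a with h | h
    · have hx : X ^ (2*a+1) * (Qq⁻¹) ^ (a+1) * Qq ^ b
          = X ^ (2*a+1) * ((Qq⁻¹) ^ (a+1) * Qq ^ b) := by ring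
      rw [hx]
      exact coeff_Xpow_mul_zero19 _ (by omega)
    · have hx : X ^ (2*a+1) * (Qq⁻¹) ^ (a+1) * Qq ^ b
          = X ^ (2*a+1) * ((Qq⁻¹) ^ (a+1) * Qq ^ b) := by ring
      rw [hx, Qs_cancel19 φ β (by omega)]
      have hy : (X ^ (2*a+1) : PowerSeries ℚ) * Qq ^ (b - (a+1))
          = ((((1 : Polynomial ℚ)) * Polynomial.X ^ (2*a+1)
              * (1 + Polynomial.C φ * Polynomial.X + Polynomial.C β * Polynomial.X ^ 2) ^ (b - (a+1)) :
              Polynomial ℚ) : PowerSeries ℚ) := by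
        push_cast
        try rw [hQq]
        try ring
      rw [hy]
      refine coe_coeff_zero19 _ (lt_of_le_of_lt
        (deg_bound19 φ β _ 0 (2*a+1) (b - (a+1)) (by simp)) (by omega))
  · -- n = 2a+1, m = 2b+1
    rw [pairing_eq19 (A (2*a+1)) (B (2*b+1)) (2*b+1)
        (by
          rw [hB1]
          refine le_trans (Polynomial.natDegree_mul_le) (le_trans (add_le_add
            (show (Polynomial.C (φ/2) + Polynomial.X).natDegree ≤ 1 by compute_degree)
            (natDegree_Qpow19 φ β b)) (by omega))),
      hB1 b, reflect_odd_19, hA1]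
    have hcoe : (((1 + Polynomial.C (φ/2) * Polynomial.X)
        * (1 + Polynomial.C φ * Polynomial.X + Polynomial.C β * Polynomial.X ^ 2) ^ b :
        Polynomial ℚ) : PowerSeries ℚ) = (1 + C (φ/2) * X) * Qq ^ b := by
      push_cast
      try rw [hQq]
    rw [hcoe]
    rcases lt_trichotomy a b with h | h | h
    · rw [if_neg (by omega)]
      have hx : X ^ (2*a+1) * (Qq⁻¹) ^ (a+1) * ((1 + C (φ/2) * X) * Qq ^ b)
          = ((1 + C (φ/2) * X) * X ^ (2*a+1)) * ((Qq⁻¹) ^ (a+1) * Qq ^ b) := by ring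
      rw [hx, Qs_cancel19 φ β (by omega)]
      have hy : ((1 + C (φ/2) * X) * X ^ (2*a+1)) * Qq ^ (b - (a+1))
          = (((1 + Polynomial.C (φ/2) * Polynomial.X) * Polynomial.X ^ (2*a+1)
              * (1 + Polynomial.C φ * Polynomial.X + Polynomial.C β * Polynomial.X ^ 2) ^ (b - (a+1)) :
              Polynomial ℚ) : PowerSeries ℚ) := by
        push_cast
        try rw [hQq]
        try ring
      rw [hy]
      refine coe_coeff_zero19 _ (lt_of_le_of_lt
        (deg_bound19 φ β _ 1 (2*a+1) (b - (a+1)) (by compute_degree)) (by omega))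
    · subst h
      rw [if_pos rfl]
      have hx : X ^ (2*a+1) * (Qq⁻¹) ^ (a+1) * ((1 + C (φ/2) * X) * Qq ^ a)
          = X ^ (2*a+1) * ((1 + C (φ/2) * X) * ((Qq⁻¹) ^ (a+1) * Qq ^ a)) := by ring
      rw [hx, hinv1, coeff_Xpow_mul_self19]
      exact E1_19 φ β
    · rw [if_neg (by omega)]
      have hx : X ^ (2*a+1) * (Qq⁻¹) ^ (a+1) * ((1 + C (φ/2) * X) * Qq ^ b)
          = X ^ (2*a+1) * ((1 + C (φ/2) * X) * ((Qq⁻¹) ^ (a+1) * Qq ^ b)) := by ring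
      rw [hx]
      exact coeff_Xpow_mul_zero19 _ (by omega)
end
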